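/- For every n ≥ 4 and every integer N, there exists a C_4-free graph (no induced 4-cycle) with a family of N independent n-sets admitting no rainbow independent n-set. Consequently f_{F(C_4)}(n,n) = ∞ for n ≥ 4. -/

import Mathlib

open SimpleGraph Finset

/-- `S` is an independent set in `G`. -/
def IndepIn {V : Type*} (G : SimpleGraph V) (S : Finset V) : Prop :=
  ∀ u ∈ S, ∀ v ∈ S, ¬ G.Adj u v

/-- The family `I` admits a rainbow independent `m`-set in `G`: `m` distinct pairwise
non-adjacent vertices, each chosen from a distinct member of the family. -/
def HasRainbowIndep {V ι : Type*} (G : SimpleGraph V) (I : ι → Finset V) (m : ℕ) : Prop :=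
  ∃ (j : Fin m → ι) (v : Fin m → V), Function.Injective j ∧ Function.Injective v ∧
    (∀ i, v i ∈ I (j i)) ∧ ∀ i i' : Fin m, i ≠ i' → ¬ G.Adj (v i) (v i')

/-- `G` contains no induced copy of `H`. -/
def IndFree {V W : Type*} (G : SimpleGraph V) (H : SimpleGraph W) : Prop :=
  ¬ ∃ f : W ↪ V, ∀ a b : W, G.Adj (f a) (f b) ↔ H.Adj a b

namespace C4C

/-! ### The model on `Fin 4 × Fin 4`, verified by `decide` -/

/-- Boolean model adjacency on rank × label. -/
def madjB (a b : Fin 4) (x y : Fin 4) : Bool :=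
  (a < b && (y - x == 0 || y - x == 1)) || (b < a && (x - y == 0 || x - y == 1))

/-- Prop-level adjacency between "private" vertices: parts indexed by `Fin N`,
labels in `Fin 4`; for parts `i < j`, labels `x, y` are adjacent iff `y - x ∈ {0,1}` mod 4. -/
def pAdj {N : ℕ} (u v : Fin N × Fin 4) : Prop :=
  (u.1 < v.1 ∧ (v.2 - u.2 = 0 ∨ v.2 - u.2 = 1)) ∨
  (v.1 < u.1 ∧ (u.2 - v.2 = 0 ∨ u.2 - v.2 = 1))

lemma pAdj_iff_madjB {a b x y : Fin 4} :
    pAdj (a, x) (b, y) ↔ madjB a b x y = true := by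
  simp [pAdj, madjB]

def chkA (r0 r1 r2 r3 x0 x1 x2 x3 : Fin 4) : Bool :=
  !(madjB r0 r1 x0 x1 && madjB r1 r2 x1 x2 && madjB r2 r3 x2 x3 && madjB r3 r0 x3 x0 &&
    !madjB r0 r2 x0 x2 && !madjB r1 r3 x1 x3 &&
    (r0 != r2 || x0 != x2) && (r1 != r3 || x1 != x3))

def chkB (r0 r1 r2 r3 x0 x1 x2 x3 : Fin 4) : Bool :=
  !(r0 != r1 && r0 != r2 && r0 != r3 && r1 != r2 && r1 != r3 && r2 != r3 &&
    !madjB r0 r1 x0 x1 && !madjB r0 r2 x0 x2 && !madjB r0 r3 x0 x3 &&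
    !madjB r1 r2 x1 x2 && !madjB r1 r3 x1 x3 && !madjB r2 r3 x2 x3)

set_option maxRecDepth 100000 in
set_option maxHeartbeats 1000000 in
lemma chkA0 : ∀ r0 r1 r2 r3 x1 x2 x3 : Fin 4,
    chkA r0 r1 r2 r3 0 x1 x2 x3 = true := by decide

set_option maxRecDepth 100000 in
set_option maxHeartbeats 1000000 in
lemma chkB0 : ∀ r0 r1 r2 r3 x1 x2 x3 : Fin 4,
    chkB r0 r1 r2 r3 0 x1 x2 x3 = true := by decide

lemma madjB_shift (a b : Fin 4) (x y s : Fin 4) :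
    madjB a b (x - s) (y - s) = madjB a b x y := by
  simp [madjB, sub_sub_sub_cancel_right]

lemma bne_shift (x y s : Fin 4) : ((x - s) != (y - s)) = (x != y) := by
  simp [bne, sub_left_inj]

lemma chkA_all (r0 r1 r2 r3 x0 x1 x2 x3 : Fin 4) :
    chkA r0 r1 r2 r3 x0 x1 x2 x3 = true := by
  have h := chkA0 r0 r1 r2 r3 (x1 - x0) (x2 - x0) (x3 - x0)
  rwa [show (0 : Fin 4) = x0 - x0 by simp, chkA, madjB_shift, madjB_shift, madjB_shift,
    madjB_shift, madjB_shift, madjB_shift, bne_shift, bne_shift, ← chkA] at h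

lemma chkB_all (r0 r1 r2 r3 x0 x1 x2 x3 : Fin 4) :
    chkB r0 r1 r2 r3 x0 x1 x2 x3 = true := by
  have h := chkB0 r0 r1 r2 r3 (x1 - x0) (x2 - x0) (x3 - x0)
  rwa [show (0 : Fin 4) = x0 - x0 by simp, chkB, madjB_shift, madjB_shift, madjB_shift,
    madjB_shift, madjB_shift, madjB_shift, ← chkB] at h

/-- usable model lemma: no induced 4-cycle pattern. -/
lemma modelA (r x : Fin 4 → Fin 4)
    (h01 : madjB (r 0) (r 1) (x 0) (x 1) = true)
    (h12 : madjB (r 1) (r 2) (x 1) (x 2) = true)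
    (h23 : madjB (r 2) (r 3) (x 2) (x 3) = true)
    (h30 : madjB (r 3) (r 0) (x 3) (x 0) = true)
    (n02 : madjB (r 0) (r 2) (x 0) (x 2) = false)
    (n13 : madjB (r 1) (r 3) (x 1) (x 3) = false)
    (d02 : r 0 ≠ r 2 ∨ x 0 ≠ x 2) (d13 : r 1 ≠ r 3 ∨ x 1 ≠ x 3) : False := by
  have h := chkA_all (r 0) (r 1) (r 2) (r 3) (x 0) (x 1) (x 2) (x 3)
  rw [chkA, h01, h12, h23, h30, n02, n13] at h
  simp [bne_iff_ne] at h
  tauto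

/-- usable model lemma: no independent transversal over four distinct parts. -/
lemma modelB (r x : Fin 4 → Fin 4)
    (hne : ∀ s t : Fin 4, s ≠ t → r s ≠ r t)
    (hnm : ∀ s t : Fin 4, s ≠ t → madjB (r s) (r t) (x s) (x t) = false) : False := by
  have h := chkB_all (r 0) (r 1) (r 2) (r 3) (x 0) (x 1) (x 2) (x 3)
  rw [chkB, hnm 0 1 (by decide), hnm 0 2 (by decide), hnm 0 3 (by decide),
    hnm 1 2 (by decide), hnm 1 3 (by decide), hnm 2 3 (by decide)] at h
  simp [bne_iff_ne] at h
  rcases h with ((((h | h) | h) | h) | h) | h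
  exacts [hne 0 1 (by decide) h, hne 0 2 (by decide) h, hne 0 3 (by decide) h,
    hne 1 2 (by decide) h, hne 1 3 (by decide) h, hne 2 3 (by decide) h]

/-! ### Rank of four elements of a linear order into `Fin 4` -/

def rk {N : ℕ} (p : Fin 4 → Fin N) (t : Fin 4) : Fin 4 :=
  ⟨((univ : Finset (Fin 4)).filter fun s => p s < p t).card, by
    have hsub : ((univ : Finset (Fin 4)).filter fun s => p s < p t) ⊆ univ.erase t := by
      intro s hs
      rcases mem_filter.1 hs with ⟨-, hlt⟩
      exact mem_erase.2 ⟨fun hst => absurd (hst ▸ hlt) (lt_irrefl _), mem_univ _⟩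
    have := card_le_card hsub
    have h4 : (univ.erase t).card = 3 := by
      rw [card_erase_of_mem (mem_univ _)]; simp
    omega⟩

lemma rk_lt {N : ℕ} (p : Fin 4 → Fin N) {s t : Fin 4} (h : p s < p t) :
    rk p s < rk p t := by
  have : ((univ : Finset (Fin 4)).filter fun u => p u < p s) ⊂
      ((univ : Finset (Fin 4)).filter fun u => p u < p t) := by
    rw [Finset.ssubset_def]
    constructor
    · intro u hu
      rcases mem_filter.1 hu with ⟨-, hlt⟩
      exact mem_filter.2 ⟨mem_univ _, hlt.trans h⟩
    · intro hcon
      have hs : s ∈ (univ : Finset (Fin 4)).filter fun u => p u < p t :=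
        mem_filter.2 ⟨mem_univ _, h⟩
      have := mem_filter.1 (hcon hs)
      exact absurd this.2 (lt_irrefl _)
  exact Finset.card_lt_card this

lemma rk_eq {N : ℕ} (p : Fin 4 → Fin N) {s t : Fin 4} (h : p s = p t) :
    rk p s = rk p t := by
  have hf : ((univ : Finset (Fin 4)).filter fun u => p u < p s) =
      ((univ : Finset (Fin 4)).filter fun u => p u < p t) := by
    apply Finset.filter_congr
    intro u _
    rw [h]
  unfold rk
  congr 1
  rw [hf]

lemma rk_lt_iff {N : ℕ} (p : Fin 4 → Fin N) (s t : Fin 4) :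
    rk p s < rk p t ↔ p s < p t := by
  constructor
  · intro h
    rcases lt_trichotomy (p s) (p t) with h' | h' | h'
    · exact h'
    · exact absurd h (by rw [rk_eq p h']; exact lt_irrefl _)
    · exact absurd h (not_lt_of_gt (rk_lt p h'))
  · exact rk_lt p

lemma rk_ne {N : ℕ} (p : Fin 4 → Fin N) {s t : Fin 4} (h : p s ≠ p t) :
    rk p s ≠ rk p t := by
  rcases h.lt_or_gt with h' | h'
  · exact ne_of_lt (rk_lt p h')
  · exact ne_of_gt (rk_lt p h')

lemma pAdj_iff_rk {N : ℕ} (p : Fin 4 → Fin N) (x : Fin 4 → Fin 4) (s t : Fin 4) :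
    pAdj (p s, x s) (p t, x t) ↔ madjB (rk p s) (rk p t) (x s) (x t) = true := by
  rw [← pAdj_iff_madjB]
  unfold pAdj
  rw [← rk_lt_iff p s t, ← rk_lt_iff p t s]

/-! ### The graph -/

abbrev RV (N c : ℕ) : Type := (Fin N × Fin 4) ⊕ Fin c

def rAdj {N c : ℕ} : RV N c → RV N c → Prop
  | Sum.inl a, Sum.inl b => pAdj a b
  | Sum.inl _, Sum.inr _ => False
  | Sum.inr _, Sum.inl _ => False
  | Sum.inr _, Sum.inr _ => False

lemma rAdj_inl_inl {N c : ℕ} (a b : Fin N × Fin 4) :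
    rAdj (N := N) (c := c) (Sum.inl a) (Sum.inl b) ↔ pAdj a b := Iff.rfl

lemma not_rAdj_inr {N c : ℕ} (b : Fin c) (v : RV N c) :
    ¬ rAdj (Sum.inr b) v := by
  cases v <;> exact fun h => h

lemma not_rAdj_inr' {N c : ℕ} (b : Fin c) (v : RV N c) :
    ¬ rAdj v (Sum.inr b) := by
  cases v <;> exact fun h => h

def RG (N c : ℕ) : SimpleGraph (RV N c) where
  Adj := rAdj
  symm := by
    constructor
    rintro (a | a) (b | b) h
    · rcases h with ⟨h1, h2⟩ | ⟨h1, h2⟩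
      · exact Or.inr ⟨h1, h2⟩
      · exact Or.inl ⟨h1, h2⟩
    · exact h.elim
    · exact h.elim
    · exact h.elim
  loopless := by
    constructor
    rintro (a | a) h
    · rcases h with ⟨h1, -⟩ | ⟨h1, -⟩ <;> exact absurd h1 (lt_irrefl _)
    · exact h

/-- the parts: all four labels of the given private column, plus all core vertices. -/
def P (N c : ℕ) (k : Fin N) : Finset (RV N c) :=
  ((univ : Finset (Fin 4)).image fun x => Sum.inl (k, x)) ∪
  ((univ : Finset (Fin c)).image Sum.inr)

lemma mem_P {N c : ℕ} {k : Fin N} {u : RV N c} :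
    u ∈ P N c k ↔ (∃ x, u = Sum.inl (k, x)) ∨ ∃ y, u = Sum.inr y := by
  simp [P, eq_comm]

end C4C

open C4C in
theorem C4_free_rainbow_infinite (n : ℕ) (hn : 4 ≤ n) (N : ℕ) :
    ∃ (V : Type) (G : SimpleGraph V) (I : Fin N → Finset V),
      IndFree G (SimpleGraph.cycleGraph 4) ∧
      (∀ i, (I i).card = n ∧ IndepIn G (I i)) ∧
      ¬ HasRainbowIndep G I n := by
  refine ⟨RV N (n - 4), RG N (n - 4), P N (n - 4), ?_, ?_, ?_⟩
  · -- IndFree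
    rintro ⟨f, hf⟩
    -- all four images are private vertices
    have hex : ∀ t : Fin 4, ∃ a, f t = Sum.inl a := by
      intro t
      have hcyc : (SimpleGraph.cycleGraph 4).Adj t (t + 1) := by
        rw [SimpleGraph.cycleGraph_adj]
        right
        simp
      have hadj : (RG N (n - 4)).Adj (f t) (f (t + 1)) := (hf t (t + 1)).2 hcyc
      rcases hft : f t with a | b
      · exact ⟨a, rfl⟩
      · rw [hft] at hadj
        exact absurd hadj (not_rAdj_inr _ _)
    choose a ha using hex
    have hAdj : ∀ s t : Fin 4, (SimpleGraph.cycleGraph 4).Adj s t → pAdj (a s) (a t) := by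
      intro s t h
      have := (hf s t).2 h
      rwa [ha s, ha t] at this
    have hNAdj : ∀ s t : Fin 4, ¬ (SimpleGraph.cycleGraph 4).Adj s t → ¬ pAdj (a s) (a t) := by
      intro s t h hp
      exact h ((hf s t).1 (by rwa [ha s, ha t]))
    have hd : ∀ s t : Fin 4, s ≠ t → a s ≠ a t := by
      intro s t hst h
      exact hst (f.injective (by rw [ha s, ha t, h]))
    set p : Fin 4 → Fin N := fun t => (a t).1 with hp
    set x : Fin 4 → Fin 4 := fun t => (a t).2 with hx
    have key : ∀ s t : Fin 4, pAdj (a s) (a t) ↔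
        madjB (rk p s) (rk p t) (x s) (x t) = true := by
      intro s t
      exact pAdj_iff_rk p x s t
    have hEq : ∀ s t : Fin 4, a s ≠ a t → (rk p s ≠ rk p t ∨ x s ≠ x t) := by
      intro s t h
      by_cases hps : p s = p t
      · refine Or.inr fun hxx => h ?_
        have : a s = (p s, x s) := rfl
        rw [this, hps, hxx]
      · exact Or.inl (rk_ne p hps)
    refine modelA (rk p) x ?_ ?_ ?_ ?_ ?_ ?_ ?_ ?_
    · exact (key 0 1).1 (hAdj 0 1 (by decide))
    · exact (key 1 2).1 (hAdj 1 2 (by decide))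
    · exact (key 2 3).1 (hAdj 2 3 (by decide))
    · exact (key 3 0).1 (hAdj 3 0 (by decide))
    · exact Bool.not_eq_true _ ▸ fun h => hNAdj 0 2 (by decide) ((key 0 2).2 h)
    · exact Bool.not_eq_true _ ▸ fun h => hNAdj 1 3 (by decide) ((key 1 3).2 h)
    · exact hEq 0 2 (hd 0 2 (by decide))
    · exact hEq 1 3 (hd 1 3 (by decide))
  · -- cards and independence
    intro k
    constructor
    · have hdisj : Disjoint ((univ : Finset (Fin 4)).image fun x => Sum.inl (k, x))
          ((univ : Finset (Fin (n - 4))).image (Sum.inr : Fin (n - 4) → RV N (n - 4))) := by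
        rw [Finset.disjoint_left]
        intro u hu hu'
        rcases mem_image.1 hu with ⟨x, -, rfl⟩
        rcases mem_image.1 hu' with ⟨y, -, h⟩
        exact absurd h (by simp)
      rw [P, card_union_of_disjoint hdisj,
        card_image_of_injective _ (fun a b h => by simpa using h),
        card_image_of_injective _ Sum.inr_injective]
      simp only [card_univ, Fintype.card_fin]
      omega
    · intro u hu v hv hadj
      rcases mem_P.1 hu with ⟨xu, rfl⟩ | ⟨yu, rfl⟩
      · rcases mem_P.1 hv with ⟨xv, rfl⟩ | ⟨yv, rfl⟩
        · rcases hadj with ⟨h1, -⟩ | ⟨h1, -⟩ <;> exact absurd h1 (lt_irrefl _)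
        · have hadj' : rAdj (Sum.inl (k, xu)) (Sum.inr yv) := hadj
          exact hadj'
      · have hadj' : rAdj (Sum.inr yu) v := hadj
        exact not_rAdj_inr _ _ hadj'
  · -- no rainbow independent n-set
    rintro ⟨j, v, hj, hv, hmem, hnadj⟩
    -- at most n - 4 indices land in the core
    set SR : Finset (Fin n) := univ.filter fun i => (v i).isRight with hSR
    set SL : Finset (Fin n) := univ.filter fun i => (v i).isLeft with hSL
    have hSRcard : SR.card ≤ n - 4 := by
      have h1 : SR.card = (SR.image v).card :=
        (card_image_of_injOn (hv.injOn)).symm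
      have h2 : SR.image v ⊆ (univ : Finset (Fin (n - 4))).image Sum.inr := by
        intro u hu
        rcases mem_image.1 hu with ⟨i, hi, rfl⟩
        have hr := (mem_filter.1 hi).2
        rcases Sum.isRight_iff.1 hr with ⟨y, hy⟩
        rw [hy]
        exact mem_image.2 ⟨y, mem_univ _, rfl⟩
      have h3 := card_le_card h2
      rw [card_image_of_injective _ Sum.inr_injective, card_univ, Fintype.card_fin] at h3
      omega
    have hsplit : SL.card + SR.card = n := by
      have : SR = univ.filter fun i => ¬ (v i).isLeft := by
        apply filter_congr
        intro i _
        cases v i <;> simp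
      rw [hSL, this, Finset.card_filter_add_card_filter_not, card_univ,
        Fintype.card_fin]
    have hSLcard : 4 ≤ SL.card := by omega
    obtain ⟨T, hTsub, hTcard⟩ := Finset.exists_subset_card_eq hSLcard
    set e := T.equivFinOfCardEq hTcard with he
    set g : Fin 4 → Fin n := fun t => (e.symm t : Fin n) with hg
    have hginj : Function.Injective g := by
      intro s t h
      exact e.symm.injective (Subtype.ext h)
    have hgT : ∀ t, g t ∈ T := fun t => (e.symm t).2
    have hex : ∀ t : Fin 4, ∃ ab, v (g t) = Sum.inl ab := by
      intro t
      have := (mem_filter.1 (hTsub (hgT t))).2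
      rcases Sum.isLeft_iff.1 this with ⟨ab, hab⟩
      exact ⟨ab, hab⟩
    choose a ha using hex
    have hpart : ∀ t, (a t).1 = j (g t) := by
      intro t
      have hm := hmem (g t)
      rw [ha t] at hm
      rcases mem_P.1 hm with ⟨x, hx⟩ | ⟨y, hy⟩
      · have := Sum.inl.inj hx
        rw [this]
      · exact absurd hy (by simp)
    have hpd : ∀ s t : Fin 4, s ≠ t → (a s).1 ≠ (a t).1 := by
      intro s t hst h
      rw [hpart s, hpart t] at h
      exact hst (hginj (hj h))
    have hnon : ∀ s t : Fin 4, s ≠ t → ¬ pAdj (a s) (a t) := by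
      intro s t hst h
      refine hnadj (g s) (g t) (fun hh => hst (hginj hh)) ?_
      show rAdj (v (g s)) (v (g t))
      rw [ha s, ha t]
      exact h
    set p : Fin 4 → Fin N := fun t => (a t).1 with hp
    set x : Fin 4 → Fin 4 := fun t => (a t).2 with hx
    refine modelB (rk p) x (fun s t hst => rk_ne p (hpd s t hst)) ?_
    intro s t hst
    have := hnon s t hst
    rw [show a s = (p s, x s) from rfl, show a t = (p t, x t) from rfl] at this
    rw [pAdj_iff_rk p x s t] at this
    exact Bool.not_eq_true _ ▸ this
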